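/- Let v ∈ V' ≤ V, let A be uniform in L(V/V', W') (i.e., uniform among maps vanishing on V' with image in W'), and let B = w⊗φ ∼ B_v independently. Condition on V'' = ker(φ|_{V'}) and W'' = W' + span{w}. If W'' = W', then A + B is uniformly distributed in L(V/V'', W''); if W'' ≠ W', then A + B is uniformly distributed among maps in L(V/V'', W'') sending v outside W'. -/

import Mathlib

open LinearMap

lemma aux_mu (F W : Type) [Field F] [AddCommGroup W] [Module F W]
    (W' : Submodule F W) (w₀ : W) (hw₀ : w₀ ∉ W') :
    ∃ μ : W →ₗ[F] F, μ w₀ = 1 ∧ W' ≤ LinearMap.ker μ := by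
  have h0 : (Submodule.Quotient.mk w₀ : W ⧸ W') ≠ 0 :=
    fun h => hw₀ ((Submodule.Quotient.mk_eq_zero W').mp h)
  have := (Module.forall_dual_apply_eq_zero_iff F (Submodule.Quotient.mk w₀ : W ⧸ W')).not.mpr h0
  push_neg at this
  obtain ⟨φ, hφ⟩ := this
  refine ⟨((φ (Submodule.Quotient.mk w₀))⁻¹ • φ).comp W'.mkQ, ?_, ?_⟩
  · simp [inv_mul_cancel₀ hφ]
  · intro p hp
    have hz : W'.mkQ p = 0 := by
      rw [Submodule.mkQ_apply]; exact (Submodule.Quotient.mk_eq_zero W').mpr hp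
    simp [LinearMap.mem_ker, hz]

theorem stmt_9 (F V W : Type) [Field F] [Fintype F]
    [AddCommGroup V] [Module F V] [Fintype V]
    [AddCommGroup W] [Module F W] [Fintype W]
    (V' V'' : Submodule F V) (W' W'' : Submodule F W) (v : V) (hv : v ∈ V') :
    letI Ω : Set ((V →ₗ[F] W) × Module.Dual F V × W) :=
      {x | (V' ≤ LinearMap.ker x.1 ∧ LinearMap.range x.1 ≤ W') ∧ x.2.1 v = 1 ∧
        V' ⊓ LinearMap.ker x.2.1 = V'' ∧ W' ⊔ (F ∙ x.2.2) = W''}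
    letI π : (V →ₗ[F] W) × Module.Dual F V × W → (V →ₗ[F] W) :=
      fun x => x.1 + x.2.1.smulRight x.2.2
    (W'' = W' →
      letI Tgt : Set (V →ₗ[F] W) :=
        {C | V'' ≤ LinearMap.ker C ∧ LinearMap.range C ≤ W''}
      (∀ x ∈ Ω, π x ∈ Tgt) ∧
        ∀ C ∈ Tgt,
          Nat.card {x : (V →ₗ[F] W) × Module.Dual F V × W // x ∈ Ω ∧ π x = C} *
              Nat.card Tgt = Nat.card Ω) ∧
    (W'' ≠ W' →
      letI Tgt : Set (V →ₗ[F] W) :=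
        {C | V'' ≤ LinearMap.ker C ∧ LinearMap.range C ≤ W'' ∧ C v ∉ W'}
      (∀ x ∈ Ω, π x ∈ Tgt) ∧
        ∀ C ∈ Tgt,
          Nat.card {x : (V →ₗ[F] W) × Module.Dual F V × W // x ∈ Ω ∧ π x = C} *
              Nat.card Tgt = Nat.card Ω) := by
  set Ω : Set ((V →ₗ[F] W) × Module.Dual F V × W) :=
    {x | (V' ≤ LinearMap.ker x.1 ∧ LinearMap.range x.1 ≤ W') ∧ x.2.1 v = 1 ∧
      V' ⊓ LinearMap.ker x.2.1 = V'' ∧ W' ⊔ (F ∙ x.2.2) = W''} with hΩ_def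
  set π : (V →ₗ[F] W) × Module.Dual F V × W → (V →ₗ[F] W) :=
    fun x => x.1 + x.2.1.smulRight x.2.2 with hπ_def
  haveI hfin1 : Finite (V →ₗ[F] W) := Finite.of_injective _ DFunLike.coe_injective
  haveI hfin2 : Finite (Module.Dual F V) := Finite.of_injective _ DFunLike.coe_injective
  -- π x evaluated at v gives the w-component
  have hπv : ∀ x ∈ Ω, π x v = x.2.2 := by
    intro x hx
    obtain ⟨⟨hk, -⟩, hψv, -, -⟩ := hx
    have h1 : x.1 v = 0 := hk hv
    show x.1 v + (x.2.1.smulRight x.2.2) v = x.2.2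
    rw [h1, smulRight_apply, hψv, one_smul, zero_add]
  -- π x kills V''
  have hπker : ∀ x ∈ Ω, V'' ≤ LinearMap.ker (π x) := by
    intro x hx u hu
    obtain ⟨⟨hk, -⟩, -, hkx, -⟩ := hx
    rw [← hkx] at hu
    have h1 : x.1 u = 0 := hk hu.1
    have h2 : x.2.1 u = 0 := hu.2
    show x.1 u + (x.2.1.smulRight x.2.2) u = 0
    rw [h1, smulRight_apply, h2, zero_smul, add_zero]
  constructor
  · -- Case W'' = W'
    intro hW
    set Tgt : Set (V →ₗ[F] W) :=
      {C | V'' ≤ LinearMap.ker C ∧ LinearMap.range C ≤ W''} with hTgt_def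
    have hfwd : ∀ x ∈ Ω, π x ∈ Tgt := by
      intro x hx
      have hxmem := hx
      obtain ⟨⟨hk, hr⟩, hψv, hkx, hsup⟩ := hxmem
      have hw : x.2.2 ∈ W' := by
        have : x.2.2 ∈ W'' := by
          rw [← hsup]; exact Submodule.mem_sup_right (Submodule.mem_span_singleton_self _)
        rwa [hW] at this
      refine ⟨hπker x hx, ?_⟩
      rintro _ ⟨y, rfl⟩
      rw [hW]
      show x.1 y + (x.2.1.smulRight x.2.2) y ∈ W'
      rw [smulRight_apply]
      exact add_mem (hr (mem_range_self _ y)) (Submodule.smul_mem _ _ hw)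
    refine ⟨hfwd, ?_⟩
    intro C hC
    rcases Set.eq_empty_or_nonempty Ω with hΩ | ⟨x₀, hx₀⟩
    · haveI : IsEmpty {x : (V →ₗ[F] W) × Module.Dual F V × W // x ∈ Ω ∧ π x = C} :=
        ⟨fun y => (Set.eq_empty_iff_forall_notMem.mp hΩ y.1 y.2.1)⟩
      haveI : IsEmpty ↥Ω := Set.isEmpty_coe_sort.mpr hΩ
      rw [Nat.card_of_isEmpty (α := {x : (V →ₗ[F] W) × Module.Dual F V × W // x ∈ Ω ∧ π x = C}),
        zero_mul]
      exact (Nat.card_of_isEmpty).symm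
    · obtain ⟨A₀, ψ₀, w₀⟩ := x₀
      obtain ⟨⟨hA₀k, hA₀r⟩, hψ₀v, hψ₀ker, hw₀⟩ := hx₀
      have hV'' : V'' ≤ V' := by rw [← hψ₀ker]; exact inf_le_left
      have key : ∀ u ∈ V', u - ψ₀ u • v ∈ V'' := by
        intro u hu
        rw [← hψ₀ker]
        refine ⟨sub_mem hu (Submodule.smul_mem _ _ hv), ?_⟩
        simp [LinearMap.mem_ker, map_sub, map_smul, smul_eq_mul, hψ₀v]
      -- backwards map, for any C' in Tgt and suitable ψ
      have hback : ∀ C' : V →ₗ[F] W, C' ∈ Tgt → ∀ ψ : Module.Dual F V, ψ v = 1 →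
          V'' ≤ LinearMap.ker ψ →
          ((C' - ψ.smulRight (C' v), ψ, C' v) ∈ Ω ∧
            π (C' - ψ.smulRight (C' v), ψ, C' v) = C') := by
        intro C' hC' ψ hψ1 hψ2
        obtain ⟨hC1, hC2⟩ := hC'
        have hCv : C' v ∈ W' := by
          have : C' v ∈ W'' := hC2 (mem_range_self _ v)
          rwa [hW] at this
        have hzero : ∀ z ∈ V'', (C' - ψ.smulRight (C' v)) z = 0 := by
          intro z hz
          have h1 : C' z = 0 := hC1 hz
          have h2 : ψ z = 0 := hψ2 hz
          rw [LinearMap.sub_apply, smulRight_apply, h1, h2, zero_smul, sub_zero]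
        have hv0 : (C' - ψ.smulRight (C' v)) v = 0 := by
          rw [LinearMap.sub_apply, smulRight_apply, hψ1, one_smul, sub_self]
        refine ⟨⟨⟨?_, ?_⟩, hψ1, ?_, ?_⟩, ?_⟩
        · intro u hu
          have hdecomp : u = (u - ψ₀ u • v) + ψ₀ u • v := by abel
          rw [LinearMap.mem_ker, hdecomp, map_add, map_smul, hzero _ (key u hu), hv0,
            smul_zero, add_zero]
        · rintro _ ⟨y, rfl⟩
          rw [LinearMap.sub_apply, smulRight_apply]
          have hCy : C' y ∈ W' := by
            have := hC2 (mem_range_self _ y); rwa [hW] at this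
          exact sub_mem hCy (Submodule.smul_mem _ _ hCv)
        · refine le_antisymm ?_ (le_inf hV'' hψ2)
          rintro u ⟨hu1, hu2⟩
          have h1 := key u hu1
          have h2 : ψ₀ u = 0 := by
            have h3 : ψ (u - ψ₀ u • v) = 0 := hψ2 h1
            rw [map_sub, map_smul, hψ1, smul_eq_mul, mul_one] at h3
            have h4 : ψ u = 0 := hu2
            rw [h4, zero_sub, neg_eq_zero] at h3
            exact h3
          rw [h2, zero_smul, sub_zero] at h1
          exact h1
        · rw [hW]
          exact sup_eq_left.mpr ((Submodule.span_singleton_le_iff_mem _ _).mpr hCv)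
        · show (C' - ψ.smulRight (C' v)) + ψ.smulRight (C' v) = C'
          exact sub_add_cancel _ _
      -- uniqueness facts
      have huniq : ∀ x, x ∈ Ω → x.2.2 = π x v ∧ x.1 = π x - x.2.1.smulRight (π x v) ∧
          x.2.1 v = 1 ∧ V'' ≤ LinearMap.ker x.2.1 := by
        intro x hx
        have hwv : x.2.2 = π x v := (hπv x hx).symm
        obtain ⟨⟨hk, hr⟩, hψv, hkx, hsup⟩ := hx
        refine ⟨hwv, ?_, hψv, ?_⟩
        · rw [← hwv]
          show x.1 = (x.1 + x.2.1.smulRight x.2.2) - x.2.1.smulRight x.2.2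
          abel
        · rw [← hkx]; exact inf_le_right
      have e1 : {x : (V →ₗ[F] W) × Module.Dual F V × W // x ∈ Ω ∧ π x = C} ≃
          {ψ : Module.Dual F V // ψ v = 1 ∧ V'' ≤ LinearMap.ker ψ} :=
        { toFun := fun y => ⟨y.1.2.1, (huniq y.1 y.2.1).2.2.1, (huniq y.1 y.2.1).2.2.2⟩
          invFun := fun ψ => ⟨(C - ψ.1.smulRight (C v), ψ.1, C v),
            (hback C hC ψ.1 ψ.2.1 ψ.2.2).1, (hback C hC ψ.1 ψ.2.1 ψ.2.2).2⟩
          left_inv := by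
            rintro ⟨x, hx, hπx⟩
            apply Subtype.ext
            obtain ⟨h1, h2, -, -⟩ := huniq x hx
            rw [hπx] at h1 h2
            exact Prod.ext h2.symm (Prod.ext rfl h1.symm)
          right_inv := fun ψ => rfl }
      have e2 : ↥Ω ≃ ↥Tgt × {ψ : Module.Dual F V // ψ v = 1 ∧ V'' ≤ LinearMap.ker ψ} :=
        { toFun := fun x => (⟨π x.1, hfwd x.1 x.2⟩,
            ⟨x.1.2.1, (huniq x.1 x.2).2.2.1, (huniq x.1 x.2).2.2.2⟩)
          invFun := fun p => ⟨(p.1.1 - p.2.1.smulRight (p.1.1 v), p.2.1, p.1.1 v),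
            (hback p.1.1 p.1.2 p.2.1 p.2.2.1 p.2.2.2).1⟩
          left_inv := by
            rintro ⟨x, hx⟩
            apply Subtype.ext
            obtain ⟨h1, h2, -, -⟩ := huniq x hx
            exact Prod.ext h2.symm (Prod.ext rfl h1.symm)
          right_inv := by
            rintro ⟨C', ψ⟩
            have h := (hback C'.1 C'.2 ψ.1 ψ.2.1 ψ.2.2).2
            exact Prod.ext (Subtype.ext h) rfl }
      rw [Nat.card_congr e1, Nat.card_congr e2, Nat.card_prod, mul_comm]
  · -- Case W'' ≠ W'
    intro hW
    set Tgt : Set (V →ₗ[F] W) :=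
      {C | V'' ≤ LinearMap.ker C ∧ LinearMap.range C ≤ W'' ∧ C v ∉ W'} with hTgt_def
    have hfwd : ∀ x ∈ Ω, π x ∈ Tgt := by
      intro x hx
      have hxmem := hx
      obtain ⟨⟨hk, hr⟩, hψv, hkx, hsup⟩ := hxmem
      have hW'le : W' ≤ W'' := by rw [← hsup]; exact le_sup_left
      have hwW'' : x.2.2 ∈ W'' := by
        rw [← hsup]; exact Submodule.mem_sup_right (Submodule.mem_span_singleton_self _)
      have hwn : x.2.2 ∉ W' := by
        intro h
        apply hW
        rw [← hsup]
        exact sup_eq_left.mpr ((Submodule.span_singleton_le_iff_mem _ _).mpr h)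
      refine ⟨hπker x hx, ?_, ?_⟩
      · rintro _ ⟨y, rfl⟩
        show x.1 y + (x.2.1.smulRight x.2.2) y ∈ W''
        rw [smulRight_apply]
        exact add_mem (hW'le (hr (mem_range_self _ y))) (Submodule.smul_mem _ _ hwW'')
      · rw [hπv x hx]
        exact hwn
    refine ⟨hfwd, ?_⟩
    intro C hC
    rcases Set.eq_empty_or_nonempty Ω with hΩ | ⟨x₀, hx₀⟩
    · haveI : IsEmpty {x : (V →ₗ[F] W) × Module.Dual F V × W // x ∈ Ω ∧ π x = C} :=
        ⟨fun y => (Set.eq_empty_iff_forall_notMem.mp hΩ y.1 y.2.1)⟩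
      haveI : IsEmpty ↥Ω := Set.isEmpty_coe_sort.mpr hΩ
      rw [Nat.card_of_isEmpty (α := {x : (V →ₗ[F] W) × Module.Dual F V × W // x ∈ Ω ∧ π x = C}),
        zero_mul]
      exact (Nat.card_of_isEmpty).symm
    · obtain ⟨A₀, ψ₀, w₀⟩ := x₀
      obtain ⟨⟨hA₀k, hA₀r⟩, hψ₀v, hψ₀ker, hw₀⟩ := hx₀
      have hV'' : V'' ≤ V' := by rw [← hψ₀ker]; exact inf_le_left
      have key : ∀ u ∈ V', u - ψ₀ u • v ∈ V'' := by
        intro u hu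
        rw [← hψ₀ker]
        refine ⟨sub_mem hu (Submodule.smul_mem _ _ hv), ?_⟩
        simp [LinearMap.mem_ker, map_sub, map_smul, smul_eq_mul, hψ₀v]
      have hW'le : W' ≤ W'' := by rw [← hw₀]; exact le_sup_left
      have hw₀n : w₀ ∉ W' := by
        intro h
        apply hW
        rw [← hw₀]
        exact sup_eq_left.mpr ((Submodule.span_singleton_le_iff_mem _ _).mpr h)
      obtain ⟨μ, hμ1, hμ2⟩ := aux_mu F W W' w₀ hw₀n
      have hdec : ∀ y ∈ W'', y - μ y • w₀ ∈ W' := by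
        intro y hy
        rw [← hw₀] at hy
        obtain ⟨p, hp, z, hz, rfl⟩ := Submodule.mem_sup.mp hy
        obtain ⟨c, rfl⟩ := Submodule.mem_span_singleton.mp hz
        have hμp : μ p = 0 := hμ2 hp
        have hcc : μ (p + c • w₀) = c := by
          rw [map_add, map_smul, hμp, hμ1, smul_eq_mul, mul_one, zero_add]
        rw [hcc]
        have : p + c • w₀ - c • w₀ = p := by abel
        rw [this]; exact hp
      have D1 : ∀ y ∈ W'', μ y = 0 → y ∈ W' := by
        intro y hy h0
        have := hdec y hy
        rwa [h0, zero_smul, sub_zero] at this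
      have D2 : ∀ y ∈ W'', y ∉ W' → μ y ≠ 0 := fun y hy hn h0 => hn (D1 y hy h0)
      have D3 : ∀ y ∈ W'', y ∉ W' → W' ⊔ (F ∙ y) = W'' := by
        intro y hy hn
        refine le_antisymm (sup_le hW'le ((Submodule.span_singleton_le_iff_mem _ _).mpr hy)) ?_
        rw [← hw₀]
        refine sup_le le_sup_left ((Submodule.span_singleton_le_iff_mem _ _).mpr ?_)
        have hμy := D2 y hy hn
        have hkey : w₀ = (μ y)⁻¹ • y - (μ y)⁻¹ • (y - μ y • w₀) := by
          rw [smul_sub, smul_smul, inv_mul_cancel₀ hμy, one_smul]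
          abel
        rw [hkey]
        exact sub_mem (Submodule.mem_sup_right (Submodule.mem_span_singleton.mpr ⟨_, rfl⟩))
          (Submodule.mem_sup_left (Submodule.smul_mem _ _ (hdec y hy)))
      -- the inverse map
      set g : (V →ₗ[F] W) → ((V →ₗ[F] W) × Module.Dual F V × W) := fun C' =>
        (C' - ((μ (C' v))⁻¹ • (μ.comp C')).smulRight (C' v),
          (μ (C' v))⁻¹ • (μ.comp C'), C' v) with hg_def
      have hg : ∀ C' ∈ Tgt, g C' ∈ Ω ∧ π (g C') = C' := by
        intro C' hC'
        obtain ⟨hC1, hC2, hC3⟩ := hC'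
        have hCv : C' v ∈ W'' := hC2 (mem_range_self _ v)
        have hμCv : μ (C' v) ≠ 0 := D2 _ hCv hC3
        set lam : Module.Dual F V := (μ (C' v))⁻¹ • (μ.comp C') with hlam
        have hlam_apply : ∀ y, lam y = (μ (C' v))⁻¹ * μ (C' y) := by
          intro y; simp [hlam, smul_eq_mul]
        have hlv : lam v = 1 := by rw [hlam_apply, inv_mul_cancel₀ hμCv]
        have hlV : ∀ z ∈ V'', lam z = 0 := by
          intro z hz
          have h1 : C' z = 0 := hC1 hz
          rw [hlam_apply, h1, map_zero, mul_zero]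
        have hzero : ∀ z ∈ V'', (C' - lam.smulRight (C' v)) z = 0 := by
          intro z hz
          rw [LinearMap.sub_apply, smulRight_apply, hC1 hz, hlV z hz, zero_smul, sub_zero]
        have hv0 : (C' - lam.smulRight (C' v)) v = 0 := by
          rw [LinearMap.sub_apply, smulRight_apply, hlv, one_smul, sub_self]
        refine ⟨⟨⟨?_, ?_⟩, hlv, ?_, ?_⟩, ?_⟩
        · intro u hu
          have hdecomp : u = (u - ψ₀ u • v) + ψ₀ u • v := by abel
          rw [LinearMap.mem_ker]
          show (C' - lam.smulRight (C' v)) u = 0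
          rw [hdecomp, map_add, map_smul, hzero _ (key u hu), hv0, smul_zero, add_zero]
        · rintro _ ⟨y, rfl⟩
          show (C' - lam.smulRight (C' v)) y ∈ W'
          refine D1 _ ?_ ?_
          · rw [LinearMap.sub_apply, smulRight_apply]
            exact sub_mem (hC2 (mem_range_self _ y)) (Submodule.smul_mem _ _ hCv)
          · rw [LinearMap.sub_apply, smulRight_apply, map_sub, map_smul, hlam_apply, smul_eq_mul]
            field_simp
            simp
        · refine le_antisymm ?_ (le_inf hV'' (fun z hz => hlV z hz))
          rintro u ⟨hu1, hu2⟩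
          have h1 := key u hu1
          have h2 : ψ₀ u = 0 := by
            have h3 : lam (u - ψ₀ u • v) = 0 := hlV _ h1
            rw [map_sub, map_smul, hlv, smul_eq_mul, mul_one] at h3
            have h4 : lam u = 0 := hu2
            rw [h4, zero_sub, neg_eq_zero] at h3
            exact h3
          rw [h2, zero_smul, sub_zero] at h1
          exact h1
        · exact D3 _ hCv hC3
        · show (C' - lam.smulRight (C' v)) + lam.smulRight (C' v) = C'
          exact sub_add_cancel _ _
      have huniq2 : ∀ x ∈ Ω, g (π x) = x := by
        intro x hx
        have hπxTgt := hfwd x hx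
        have hwv : π x v = x.2.2 := hπv x hx
        obtain ⟨⟨hk, hr⟩, hψv, hkx, hsup⟩ := hx
        have hwW'' : x.2.2 ∈ W'' := by
          rw [← hsup]; exact Submodule.mem_sup_right (Submodule.mem_span_singleton_self _)
        have hwn : x.2.2 ∉ W' := by
          intro h
          apply hW
          rw [← hsup]
          exact sup_eq_left.mpr ((Submodule.span_singleton_le_iff_mem _ _).mpr h)
        have hμw : μ x.2.2 ≠ 0 := D2 _ hwW'' hwn
        have hcomp : ∀ y, μ ((π x) y) = x.2.1 y * μ x.2.2 := by
          intro y
          show μ (x.1 y + (x.2.1.smulRight x.2.2) y) = _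
          have h0 : μ (x.1 y) = 0 := hμ2 (hr (mem_range_self _ y))
          rw [smulRight_apply, map_add, map_smul, h0, zero_add, smul_eq_mul]
        have hψeq : (μ ((π x) v))⁻¹ • (μ.comp (π x)) = x.2.1 := by
          ext y
          have : ((μ ((π x) v))⁻¹ • (μ.comp (π x))) y = (μ ((π x) v))⁻¹ * μ ((π x) y) := by
            simp [smul_eq_mul]
          rw [this, hwv, hcomp y]
          field_simp
        show (π x - ((μ ((π x) v))⁻¹ • (μ.comp (π x))).smulRight ((π x) v),
          (μ ((π x) v))⁻¹ • (μ.comp (π x)), (π x) v) = x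
        rw [hψeq, hwv]
        refine Prod.ext ?_ (Prod.ext rfl rfl)
        show (x.1 + x.2.1.smulRight x.2.2) - x.2.1.smulRight x.2.2 = x.1
        abel
      -- the fiber over C is a singleton
      haveI : Subsingleton {x : (V →ₗ[F] W) × Module.Dual F V × W // x ∈ Ω ∧ π x = C} :=
        ⟨fun a b => Subtype.ext (by
          rw [← huniq2 a.1 a.2.1, ← huniq2 b.1 b.2.1, a.2.2, b.2.2])⟩
      haveI : Unique {x : (V →ₗ[F] W) × Module.Dual F V × W // x ∈ Ω ∧ π x = C} :=
        uniqueOfSubsingleton ⟨g C, (hg C hC).1, (hg C hC).2⟩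
      have e : ↥Ω ≃ ↥Tgt :=
        { toFun := fun x => ⟨π x.1, hfwd x.1 x.2⟩
          invFun := fun C' => ⟨g C'.1, (hg C'.1 C'.2).1⟩
          left_inv := fun x => Subtype.ext (huniq2 x.1 x.2)
          right_inv := fun C' => Subtype.ext (hg C'.1 C'.2).2 }
      rw [Nat.card_unique, one_mul, Nat.card_congr e]
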